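/- More generally, for any finite set C with |C| = m and only singleton approvals (δ({o}) = α_o for each o ∈ C and δ(S) = 0 for |S| ≠ 1), the Shapley value of alternative o equals (1/m)·α_o − (1/(m(m−1)))·Σ_{o' ≠ o} α_{o'}; consequently Φ_o(δ) > Φ_{o'}(δ) if and only if α_o > α_{o'}. -/

import Mathlib

open Finset

/-- The Shapley value of player `i` in the TU game `δ` on the finite player set `ι`. -/
noncomputable def shapley {ι : Type*} [Fintype ι] [DecidableEq ι]
    (δ : Finset ι → ℝ) (i : ι) : ℝ :=
  ∑ S ∈ (Finset.univ.erase i).powerset,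
    ((S.card.factorial * (Fintype.card ι - S.card - 1).factorial : ℝ) /
      (Fintype.card ι).factorial) * (δ (insert i S) - δ S)

/-- With only singleton approvals, the Shapley value of `o` equals
`α o / m − (∑_{o' ≠ o} α o') / (m (m − 1))` where `m = |C|`, and consequently the
Shapley ranking coincides with the approval ranking. -/
theorem shapley_singletons_general {C : Type*} [Fintype C] [DecidableEq C] [Nonempty C]
    (α : C → ℝ) (δ : Finset C → ℝ)
    (hsingle : ∀ o : C, δ {o} = α o)
    (hother : ∀ S : Finset C, S.card ≠ 1 → δ S = 0) :
    (∀ o : C, shapley δ o =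
      α o / (Fintype.card C : ℝ) -
        (∑ o' ∈ Finset.univ.erase o, α o') /
          ((Fintype.card C : ℝ) * ((Fintype.card C : ℝ) - 1))) ∧
    (∀ o o' : C, shapley δ o > shapley δ o' ↔ α o > α o') := by
  set m := Fintype.card C with hm
  have hm1 : 1 ≤ m := Fintype.card_pos
  have part1 : ∀ o : C, shapley δ o =
      α o / (m : ℝ) -
        (∑ o' ∈ Finset.univ.erase o, α o') / ((m : ℝ) * ((m : ℝ) - 1)) := by
    intro o
    have hsplit : shapley δ o =
        (∑ S ∈ (Finset.univ.erase o).powerset,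
          ((S.card.factorial * (m - S.card - 1).factorial : ℝ) / m.factorial) *
            δ (insert o S)) -
        (∑ S ∈ (Finset.univ.erase o).powerset,
          ((S.card.factorial * (m - S.card - 1).factorial : ℝ) / m.factorial) * δ S) := by
      rw [shapley, ← Finset.sum_sub_distrib]
      exact Finset.sum_congr rfl fun S _ => by ring
    have h1 : (∑ S ∈ (Finset.univ.erase o).powerset,
          ((S.card.factorial * (m - S.card - 1).factorial : ℝ) / m.factorial) *
            δ (insert o S)) = ((m - 1).factorial : ℝ) / m.factorial * α o := by
      rw [Finset.sum_eq_single_of_mem ∅ (Finset.empty_mem_powerset _)]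
      · simp [hsingle o]
      · intro S hS hSne
        have hoS : o ∉ S := fun h =>
          (Finset.mem_erase.mp (Finset.mem_powerset.mp hS h)).1 rfl
        have : (insert o S).card ≠ 1 := by
          rw [Finset.card_insert_of_notMem hoS]
          have : S.card ≠ 0 := fun h => hSne (Finset.card_eq_zero.mp h)
          omega
        rw [hother _ this, mul_zero]
    have h2 : (∑ S ∈ (Finset.univ.erase o).powerset,
          ((S.card.factorial * (m - S.card - 1).factorial : ℝ) / m.factorial) * δ S)
        = ((m - 2).factorial : ℝ) / m.factorial * ∑ o' ∈ Finset.univ.erase o, α o' := by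
      rw [← Finset.sum_filter_of_ne (p := fun S => S.card = 1)
        (fun S _ h => by by_contra hc; exact h (by rw [hother S hc, mul_zero])),
        ← Finset.powersetCard_eq_filter, Finset.powersetCard_one, Finset.sum_map,
        Finset.mul_sum]
      refine Finset.sum_congr rfl fun o' _ => ?_
      simp only [Function.Embedding.coeFn_mk, Finset.card_singleton, hsingle,
        Nat.factorial_one, show m - 1 - 1 = m - 2 from by omega]
      push_cast
      ring
    rw [hsplit, h1, h2]
    rcases eq_or_lt_of_le hm1 with h | h
    · have hc : (Finset.univ.erase o) = ∅ := by
        rw [← Finset.card_eq_zero, Finset.card_erase_of_mem (Finset.mem_univ o),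
          Finset.card_univ, ← hm]
        omega
      rw [hc]
      simp [← h, Nat.factorial]
    · have h2m : 2 ≤ m := h
      have hfne : ((m - 2).factorial : ℝ) ≠ 0 := Nat.cast_ne_zero.mpr (m-2).factorial_ne_zero
      have hMne : (m : ℝ) ≠ 0 := by positivity
      have hM1ne : (m : ℝ) - 1 ≠ 0 := by
        have : (2:ℝ) ≤ (m:ℝ) := by exact_mod_cast h2m
        linarith
      have c1 : ((m - 1).factorial : ℝ) = ((m : ℝ) - 1) * ((m - 2).factorial : ℝ) := by
        have e : (m - 1).factorial = (m - 1) * (m - 2).factorial := by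
          conv_lhs => rw [show m - 1 = (m - 2) + 1 from by omega]
          rw [Nat.factorial_succ]
          congr 2
          omega
        rw [e]
        push_cast [Nat.cast_sub hm1]
        ring
      have c2 : (m.factorial : ℝ) = (m : ℝ) * (((m : ℝ) - 1) * ((m - 2).factorial : ℝ)) := by
        have e : m.factorial = m * (m - 1).factorial := by
          conv_lhs => rw [show m = (m - 1) + 1 from by omega]
          rw [Nat.factorial_succ]
          congr 2
          omega
        rw [e]
        push_cast [c1]
        ring
      rw [c1, c2]
      field_simp
  refine ⟨part1, fun o o' => ?_⟩
  rcases eq_or_ne o o' with rfl | hne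
  · simp
  · have h2m : 2 ≤ m := Fintype.one_lt_card_iff.mpr ⟨o, o', hne⟩
    have hM : (2:ℝ) ≤ (m:ℝ) := by exact_mod_cast h2m
    have hMne : (m : ℝ) ≠ 0 := by positivity
    have hM1ne : (m : ℝ) - 1 ≠ 0 := by linarith
    rw [part1 o, part1 o',
      eq_sub_of_add_eq (Finset.sum_erase_add Finset.univ α (Finset.mem_univ o)),
      eq_sub_of_add_eq (Finset.sum_erase_add Finset.univ α (Finset.mem_univ o'))]
    set A := ∑ x, α x
    have key : (α o / (m:ℝ) - (A - α o) / ((m:ℝ) * ((m:ℝ) - 1))) -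
        (α o' / (m:ℝ) - (A - α o') / ((m:ℝ) * ((m:ℝ) - 1))) = (α o - α o') / ((m:ℝ) - 1) := by
      field_simp
      ring
    rw [gt_iff_lt, ← sub_pos, key, lt_div_iff₀ (by linarith : (0:ℝ) < (m:ℝ) - 1),
      zero_mul, sub_pos]
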